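/- Suppose S = ∞ and there exist z̃ > max(s₀,1), C₀ > 0 and γ₀ ∈ [0,1) such that m(z) ≥ C₀ z^{γ₀} for all z > z̃. Then there exists a constant C > 0 such that h(z) ≤ C (f(z)² + 1 + z^{2−γ₀}) for all z > 0. -/

import Mathlib

open MeasureTheory Set Filter Topology

/-- A concave positive function on `(0,∞)` satisfies `m r ≥ (m a / (2a)) r` for `0 < r ≤ a`. -/
lemma hupb_lin_lower (m : ℝ → ℝ) (hconc : ConcaveOn ℝ (Ioi 0) m)
    (hm_pos : ∀ z : ℝ, 0 < z → 0 < m z)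
    (a : ℝ) (ha : 0 < a) :
    ∀ r : ℝ, 0 < r → r ≤ a → m a / (2 * a) * r ≤ m r := by
  intro r hr hra
  have hd : 0 < a - r / 2 := by linarith
  have hd' : a - r / 2 ≠ 0 := hd.ne'
  set t : ℝ := (a - r) / (a - r / 2) with ht
  have ht0 : 0 ≤ t := div_nonneg (by linarith) hd.le
  have ht1 : (1 - t) = (r / 2) / (a - r / 2) := by
    rw [ht, one_sub_div hd']; congr 1; ring
  have hcomb : t • (r / 2) + (1 - t) • a = r := by
    simp only [smul_eq_mul, ht1, ht]
    rw [one_sub_div hd', div_mul_eq_mul_div _ (a - r / 2) a, div_mul_eq_mul_div (a - r) (a - r / 2) (r / 2), ← add_div, div_eq_iff hd']; ring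
  have h1t : 0 ≤ 1 - t := by rw [ht1]; positivity
  have key := hconc.2 (mem_Ioi.2 (by linarith : (0:ℝ) < r / 2)) (mem_Ioi.2 ha)
      ht0 h1t (by ring)
  rw [hcomb] at key
  simp only [smul_eq_mul] at key
  have h2 : (1 - t) * m a ≤ m r := by
    nlinarith [mul_nonneg ht0 (hm_pos (r/2) (by linarith)).le]
  calc m a / (2 * a) * r = (r / (2 * a)) * m a := by ring
    _ ≤ (1 - t) * m a := by
        apply mul_le_mul_of_nonneg_right _ (hm_pos a ha).le
        rw [ht1, div_le_div_iff₀ (by positivity) hd]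
        nlinarith
    _ ≤ m r := h2

/-- For `S = ∞` and `m` satisfying (M) on `(0,∞)`, if there exist
`z̃ > max(s₀,1)`, `C₀ > 0` and `γ₀ ∈ [0,1)` with `m(z) ≥ C₀ z^{γ₀}` for all `z > z̃`,
then there exists `C > 0` such that `h(z) ≤ C (f(z)² + 1 + z^{2−γ₀})` for all `z > 0`,
where `f(z) := ∫₀^z √(2/m(r)) dr` and `h(z) := ∫_{s₀}^z (z−r)/m(r) dr`. -/
theorem h_upper_bound_power_growth
    (m : ℝ → ℝ)
    (hm_c2 : ContDiffOn ℝ 2 m (Ioi 0))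
    (hm_pos : ∀ z : ℝ, 0 < z → 0 < m z)
    (hm_conc : ∀ z : ℝ, 0 < z → deriv (deriv m) z ≤ 0)
    (hm0 : Tendsto m (𝓝[>] (0 : ℝ)) (𝓝 0))
    (s₀ : ℝ) (hs₀ : 0 < s₀)
    (ztilde C₀ γ₀ : ℝ) (hzt : max s₀ 1 < ztilde) (hC₀ : 0 < C₀)
    (hγ₀ : γ₀ ∈ Ico (0 : ℝ) 1)
    (hlow : ∀ z : ℝ, ztilde < z → C₀ * z ^ γ₀ ≤ m z) :
    ∃ C : ℝ, 0 < C ∧ ∀ z : ℝ, 0 < z →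
      (∫ r in s₀..z, (z - r) / m r) ≤
        C * ((∫ r in Ioo (0 : ℝ) z, Real.sqrt (2 / m r)) ^ 2 + 1 + z ^ (2 - γ₀)) := by
  obtain ⟨hγ0, hγ1⟩ := hγ₀
  have hzt_s : s₀ < ztilde := lt_of_le_of_lt (le_max_left _ _) hzt
  have hzt_1 : (1:ℝ) < ztilde := lt_of_le_of_lt (le_max_right _ _) hzt
  have hzt_pos : (0:ℝ) < ztilde := by linarith
  -- continuity of m on (0,∞)
  have hmc : ContinuousOn m (Ioi 0) := hm_c2.continuousOn
  -- concavity
  have hconc : ConcaveOn ℝ (Ioi 0) m := by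
    refine concaveOn_of_deriv2_nonpos (convex_Ioi 0) hmc ?_ ?_ ?_
    · rw [interior_Ioi]; exact hm_c2.differentiableOn (by norm_num)
    · rw [interior_Ioi]
      exact (hm_c2.deriv_of_isOpen isOpen_Ioi (show (1 : WithTop ℕ∞) + 1 ≤ 2 by norm_num)).differentiableOn (by norm_num)
    · rw [interior_Ioi]; intro x hx; exact hm_conc x hx
  set c0 : ℝ := m s₀ / (2 * s₀) with hc0
  have hc0_pos : 0 < c0 := by
    have := hm_pos s₀ hs₀; positivity
  set c1 : ℝ := m ztilde / (2 * ztilde) with hc1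
  have hc1_pos : 0 < c1 := by
    have := hm_pos ztilde hzt_pos; positivity
  set c3 : ℝ := min (c1 * s₀ / ztilde ^ γ₀) C₀ with hc3
  have hztγ : (0:ℝ) < ztilde ^ γ₀ := Real.rpow_pos_of_pos hzt_pos _
  have hc3_pos : 0 < c3 := lt_min (by positivity) hC₀
  -- the key lower bound on [s₀,∞)
  have hmlow : ∀ r : ℝ, s₀ ≤ r → c3 * r ^ γ₀ ≤ m r := by
    intro r hr
    have hr0 : 0 < r := lt_of_lt_of_le hs₀ hr
    rcases le_or_gt r ztilde with h | h
    · calc c3 * r ^ γ₀ ≤ (c1 * s₀ / ztilde ^ γ₀) * r ^ γ₀ :=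
            mul_le_mul_of_nonneg_right (min_le_left _ _) (Real.rpow_nonneg hr0.le _)
        _ ≤ (c1 * s₀ / ztilde ^ γ₀) * ztilde ^ γ₀ :=
            mul_le_mul_of_nonneg_left (Real.rpow_le_rpow hr0.le h hγ0) (by positivity)
        _ = c1 * s₀ := div_mul_cancel₀ _ hztγ.ne'
        _ ≤ c1 * r := mul_le_mul_of_nonneg_left hr hc1_pos.le
        _ ≤ m r := hupb_lin_lower m hconc hm_pos ztilde hzt_pos r hr0 h
    · calc c3 * r ^ γ₀ ≤ C₀ * r ^ γ₀ :=
            mul_le_mul_of_nonneg_right (min_le_right _ _) (Real.rpow_nonneg hr0.le _)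
        _ ≤ m r := hlow r h
  set C : ℝ := max (s₀ / c0) (1 / (c3 * (1 - γ₀))) + 1 with hC
  have hC_pos : 0 < C := by positivity
  refine ⟨C, hC_pos, ?_⟩
  intro z hz
  set I : ℝ := ∫ r in Ioo (0 : ℝ) z, Real.sqrt (2 / m r) with hI
  have hI2 : 0 ≤ I ^ 2 := sq_nonneg _
  have hzγ : 0 ≤ z ^ (2 - γ₀) := Real.rpow_nonneg hz.le _
  rcases le_or_gt z s₀ with hzs | hzs
  · -- small z : the integral is bounded by s₀ / c0
    have hmub : ∀ r ∈ Icc z s₀, (r - z) / m r ≤ 1 / c0 := by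
      intro r ⟨hr1, hr2⟩
      have hr0 : 0 < r := lt_of_lt_of_le hz hr1
      have hmr : c0 * r ≤ m r := by
        have := hupb_lin_lower m hconc hm_pos s₀ hs₀ r hr0 hr2
        linarith [this]
      calc (r - z) / m r ≤ r / (c0 * r) :=
            div_le_div₀ hr0.le (by linarith) (by positivity) hmr
        _ = 1 / c0 := by field_simp
    have hcont : ContinuousOn (fun r => (r - z) / m r) (Icc z s₀) := by
      apply ContinuousOn.div
      · exact (continuous_id.sub continuous_const).continuousOn
      · exact hmc.mono (fun x hx => lt_of_lt_of_le hz hx.1)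
      · exact fun x hx => (hm_pos x (lt_of_lt_of_le hz hx.1)).ne'
    have hint : IntervalIntegrable (fun r => (r - z) / m r) volume z s₀ :=
      hcont.intervalIntegrable_of_Icc hzs
    have hflip : (∫ r in s₀..z, (z - r) / m r) = ∫ r in z..s₀, (r - z) / m r := by
      rw [intervalIntegral.integral_symm, ← intervalIntegral.integral_neg]
      congr 1; ext r; ring
    rw [hflip]
    have hle : (∫ r in z..s₀, (r - z) / m r) ≤ ∫ r in z..s₀, (1 / c0 : ℝ) := by
      apply intervalIntegral.integral_mono_on hzs hint intervalIntegrable_const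
      exact hmub
    rw [intervalIntegral.integral_const, smul_eq_mul] at hle
    have h1 : (s₀ - z) * (1 / c0) ≤ s₀ / c0 := by
      rw [div_eq_mul_one_div s₀ c0]
      exact mul_le_mul_of_nonneg_right (by linarith) (by positivity)
    have h2 : s₀ / c0 ≤ C := by
      rw [hC]; have := le_max_left (s₀ / c0) (1 / (c3 * (1 - γ₀))); linarith
    have h3 : C * 1 ≤ C * (I ^ 2 + 1 + z ^ (2 - γ₀)) :=
      mul_le_mul_of_nonneg_left (by linarith) hC_pos.le
    calc (∫ r in z..s₀, (r - z) / m r) ≤ (s₀ - z) * (1 / c0) := hle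
      _ ≤ s₀ / c0 := h1
      _ ≤ C := h2
      _ = C * 1 := (mul_one C).symm
      _ ≤ C * (I ^ 2 + 1 + z ^ (2 - γ₀)) := h3
  · -- large z
    have hmub : ∀ r ∈ Icc s₀ z, (z - r) / m r ≤ (z / c3) * r ^ (-γ₀) := by
      intro r ⟨hr1, hr2⟩
      have hr0 : 0 < r := lt_of_lt_of_le hs₀ hr1
      have hrγ : 0 < r ^ γ₀ := Real.rpow_pos_of_pos hr0 _
      have h1 : (z - r) / m r ≤ z / (c3 * r ^ γ₀) :=
        div_le_div₀ hz.le (by linarith) (by positivity) (hmlow r hr1)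
      rw [Real.rpow_neg hr0.le]
      calc (z - r) / m r ≤ z / (c3 * r ^ γ₀) := h1
        _ = z / c3 * (r ^ γ₀)⁻¹ := by rw [div_mul_eq_div_div, div_eq_mul_inv]
    have hcont : ContinuousOn (fun r => (z - r) / m r) (Icc s₀ z) := by
      apply ContinuousOn.div
      · exact (continuous_const.sub continuous_id).continuousOn
      · exact hmc.mono (fun x hx => lt_of_lt_of_le hs₀ hx.1)
      · exact fun x hx => (hm_pos x (lt_of_lt_of_le hs₀ hx.1)).ne'
    have hint : IntervalIntegrable (fun r => (z - r) / m r) volume s₀ z :=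
      hcont.intervalIntegrable_of_Icc hzs.le
    have hint2 : IntervalIntegrable (fun r => (z / c3) * r ^ (-γ₀)) volume s₀ z :=
      (intervalIntegral.intervalIntegrable_rpow' (by linarith)).const_mul _
    have hle : (∫ r in s₀..z, (z - r) / m r) ≤ ∫ r in s₀..z, (z / c3) * r ^ (-γ₀) := by
      apply intervalIntegral.integral_mono_on hzs.le hint hint2 hmub
    have hval : (∫ r in s₀..z, (z / c3) * r ^ (-γ₀))
        = (z / c3) * ((z ^ (-γ₀ + 1) - s₀ ^ (-γ₀ + 1)) / (-γ₀ + 1)) := by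
      rw [intervalIntegral.integral_const_mul, integral_rpow (Or.inl (by linarith))]
    have hstep : (z / c3) * ((z ^ (-γ₀ + 1) - s₀ ^ (-γ₀ + 1)) / (-γ₀ + 1))
        ≤ (z / c3) * (z ^ (1 - γ₀) / (1 - γ₀)) := by
      apply mul_le_mul_of_nonneg_left _ (by positivity)
      rw [show -γ₀ + 1 = 1 - γ₀ by ring]
      have h0 := Real.rpow_nonneg hs₀.le (1 - γ₀)
      rw [div_le_div_iff₀ (by linarith) (by linarith)]
      nlinarith
    have hpow : z ^ (2 - γ₀) = z * z ^ (1 - γ₀) := by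
      rw [show (2 - γ₀ : ℝ) = 1 + (1 - γ₀) by ring, Real.rpow_add hz, Real.rpow_one]
    have hfin : (z / c3) * (z ^ (1 - γ₀) / (1 - γ₀)) ≤ C * z ^ (2 - γ₀) := by
      have hCge : 1 / (c3 * (1 - γ₀)) ≤ C := by
        rw [hC]; have := le_max_right (s₀ / c0) (1 / (c3 * (1 - γ₀))); linarith
      have heq : (z / c3) * (z ^ (1 - γ₀) / (1 - γ₀)) = (1 / (c3 * (1 - γ₀))) * z ^ (2 - γ₀) := by
        rw [hpow]; field_simp
      rw [heq]
      exact mul_le_mul_of_nonneg_right hCge hzγ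
    have h3 : C * z ^ (2 - γ₀) ≤ C * (I ^ 2 + 1 + z ^ (2 - γ₀)) :=
      mul_le_mul_of_nonneg_left (by linarith) hC_pos.le
    rw [hval] at hle
    exact hle.trans (hstep.trans (hfin.trans h3))
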